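/- For every positive integer n and every real number p > 0 with p ≠ 1, one has (1 − p^{1/(1-p) − n·pⁿ/(1-pⁿ)}) / (1 − pⁿ) ≥ 1/e. -/

import Mathlib

open Real

lemma numeric1 : Real.exp (-(1/2:ℝ)) + Real.exp (-1:ℝ) ≤ 1 := by
  have ha0 : (0:ℝ) < Real.exp (-(1/2:ℝ)) := Real.exp_pos _
  have hsq : Real.exp (-(1/2:ℝ)) ^ 2 = Real.exp (-1:ℝ) := by
    rw [← Real.exp_nat_mul]; norm_num
  have he : Real.exp (-1:ℝ) < 0.36788 := by
    have h1 : (2.7182818283:ℝ) < Real.exp 1 := Real.exp_one_gt_d9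
    rw [show (-1:ℝ) = -(1:ℝ) by norm_num, Real.exp_neg]
    rw [inv_lt_comm₀ (by positivity) (by norm_num)]
    linarith
  nlinarith [hsq, he, ha0]

lemma chordS1 {x : ℝ} (hx : 0 ≤ x) (hx2 : x ≤ 1/2) :
    Real.exp (-x) ≤ 1 - 2 * Real.exp (-1:ℝ) * x := by
  have hc := convexOn_exp.2 (Set.mem_univ (0:ℝ)) (Set.mem_univ (-(1/2):ℝ))
    (by linarith : (0:ℝ) ≤ 1 - 2*x) (by linarith : (0:ℝ) ≤ 2*x) (by ring)
  simp only [smul_eq_mul] at hc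
  rw [show (1 - 2*x) * 0 + 2*x * (-(1/2)) = -x by ring, Real.exp_zero] at hc
  have := numeric1
  nlinarith [Real.exp_pos (-(1/2):ℝ)]

lemma L2' {q : ℝ} (hq : 0 < q) (hq1 : q ≤ 1) : q - 1/q ≤ 2 * Real.log q := by
  rcases eq_or_lt_of_le hq1 with h | h
  · subst h; simp
  · have hs : 0 < -Real.log q := by
      have := Real.log_neg hq h; linarith
    have hsinh := (Real.self_lt_sinh_iff.mpr hs).le
    rw [Real.sinh_eq] at hsinh
    have e1 : Real.exp (-Real.log q) = 1/q := by
      rw [Real.exp_neg, Real.exp_log hq, one_div]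
    have e2 : Real.exp (-(-Real.log q)) = q := by
      rw [neg_neg, Real.exp_log hq]
    rw [e1, e2] at hsinh
    linarith

lemma L1' {q : ℝ} (hq : 1 ≤ q) : 2*(q-1)/(q+1) ≤ Real.log q := by
  have key : ∀ x ∈ Set.Ici (1:ℝ), 0 ≤ (x+1) * Real.log x - 2*(x-1) := by
    have hmono : MonotoneOn (fun x : ℝ => (x+1) * Real.log x - 2*(x-1)) (Set.Ici 1) := by
      apply monotoneOn_of_deriv_nonneg (convex_Ici 1)
      · apply ContinuousOn.sub
        · exact ContinuousOn.mul (by fun_prop) (Real.continuousOn_log.mono (by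
            intro x hx; simp at hx ⊢; linarith))
        · fun_prop
      · intro x hx
        rw [interior_Ici] at hx
        have hx0 : (0:ℝ) < x := by simp at hx; linarith
        apply DifferentiableAt.differentiableWithinAt
        apply DifferentiableAt.sub
        · exact DifferentiableAt.mul (by fun_prop) (Real.differentiableAt_log hx0.ne')
        · fun_prop
      · intro x hx
        rw [interior_Ici] at hx
        have hx1 : (1:ℝ) < x := hx
        have hx0 : (0:ℝ) < x := by linarith
        have hd : HasDerivAt (fun x : ℝ => (x+1) * Real.log x - 2*(x-1))
            (1 * Real.log x + (x+1) * x⁻¹ - 2) x := by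
          have h1 : HasDerivAt (fun x : ℝ => x + 1) 1 x := (hasDerivAt_id x).add_const 1
          have h2 := h1.mul (Real.hasDerivAt_log hx0.ne')
          have h3 : HasDerivAt (fun x : ℝ => 2*(x-1)) 2 x := by
            simpa using ((hasDerivAt_id x).sub_const 1).const_mul 2
          exact h2.sub h3
        rw [hd.deriv]
        have hlog : 1 - x⁻¹ ≤ Real.log x := Real.one_sub_inv_le_log_of_pos hx0
        have : (x+1) * x⁻¹ = 1 + x⁻¹ := by field_simp
        rw [this]
        nlinarith
    intro x hx
    have := hmono (Set.mem_Ici.mpr le_rfl) hx (by exact hx)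
    simpa using this
  have h := key q hq
  rw [div_le_iff₀ (by linarith : (0:ℝ) < q + 1)]
  nlinarith

lemma exp_pow4 (x : ℝ) : (Real.exp x)^4 = Real.exp (4*x) := by
  rw [← Real.exp_nat_mul]; norm_num

lemma lemA {w : ℝ} (h0 : 0 ≤ w) (h1 : w ≤ 1) :
    2 - 2*w + Real.exp 1 * w ≤ (2 - w) * Real.exp w := by
  rcases le_or_gt w (1/2) with hw | hw
  · have hq : (1 + w/4)^4 ≤ Real.exp w := by
      have h := Real.add_one_le_exp (w/4)
      have h2 : (w/4 + 1)^4 ≤ (Real.exp (w/4))^4 :=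
        pow_le_pow_left₀ (by linarith) h 4
      rw [exp_pow4] at h2
      have h4 : 4 * (w/4) = w := by ring
      rw [h4] at h2
      calc (1 + w/4)^4 = (w/4 + 1)^4 := by ring
        _ ≤ Real.exp w := h2
    have he : Real.exp 1 < 2.7182818286 := Real.exp_one_lt_d9
    have hle : (2 - w) * (1 + w/4)^4 ≤ (2 - w) * Real.exp w :=
      mul_le_mul_of_nonneg_left hq (by linarith)
    nlinarith [hle, sq_nonneg w, pow_nonneg h0 3, pow_nonneg h0 4, pow_nonneg h0 5]
  · set s := 1 - w with hs
    have hs0 : 0 ≤ s := by simp only [hs]; linarith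
    have hs2 : s < 1/2 := by simp only [hs]; linarith
    have hexp : Real.exp w = Real.exp 1 * Real.exp (-s) := by
      rw [← Real.exp_add, hs]; ring_nf
    have hq : (1 - s/4)^4 ≤ Real.exp (-s) := by
      have h := Real.add_one_le_exp (-s/4)
      have h2 : (-s/4 + 1)^4 ≤ (Real.exp (-s/4))^4 :=
        pow_le_pow_left₀ (by linarith) h 4
      rw [exp_pow4] at h2
      have h4 : 4 * (-s/4) = -s := by ring
      rw [h4] at h2
      calc (1 - s/4)^4 = (-s/4 + 1)^4 := by ring
        _ ≤ Real.exp (-s) := h2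
    have heg : (2.7182818283:ℝ) < Real.exp 1 := Real.exp_one_gt_d9
    have hP : (0.758:ℝ) ≤ 1 - 5*s/8 + 5*s^2/16 - 15*s^3/256 + s^4/256 := by
      nlinarith [sq_nonneg s, pow_nonneg hs0 3, pow_nonneg hs0 4,
        mul_nonneg hs0 (by linarith : (0:ℝ) ≤ 1/2 - s), sq_nonneg (1/2 - s),
        mul_nonneg (mul_nonneg hs0 hs0) (by linarith : (0:ℝ) ≤ 1/2 - s)]
    have hkey : 2 ≤ Real.exp 1 * (1 - 5*s/8 + 5*s^2/16 - 15*s^3/256 + s^4/256) := by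
      nlinarith [hP, heg]
    have hid : (1+s) * ((1 - s/4)^4) =
        (1 - s) + s * (1 - 5*s/8 + 5*s^2/16 - 15*s^3/256 + s^4/256) := by ring
    have hle : (1+s) * (Real.exp 1 * (1 - s/4)^4) ≤ (2 - w) * Real.exp w := by
      rw [hexp, show (2:ℝ) - w = 1 + s by simp only [hs]; ring]
      have := mul_le_mul_of_nonneg_left hq (Real.exp_pos 1).le
      nlinarith [this, hs0]
    have hle2 : 2*s + Real.exp 1 * (1 - s) ≤ (1+s) * (Real.exp 1 * (1 - s/4)^4) := by
      have : (1+s) * (Real.exp 1 * (1 - s/4)^4) =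
          Real.exp 1 * (1 - s) + s * (Real.exp 1 * (1 - 5*s/8 + 5*s^2/16 - 15*s^3/256 + s^4/256)) := by
        rw [show (1+s) * (Real.exp 1 * (1 - s/4)^4) = Real.exp 1 * ((1+s) * ((1 - s/4)^4)) by ring,
          hid]; ring
      rw [this]
      nlinarith [mul_le_mul_of_nonneg_left hkey hs0]
    have hgoal : 2 - 2*w + Real.exp 1 * w = 2*s + Real.exp 1 * (1 - s) := by
      simp only [hs]; ring
    linarith

lemma lemB {q : ℝ} (hq : 1 ≤ q) : q + Real.exp 1 - 1 ≤ q * Real.exp (2/(q+1)) := by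
  set w := 2/(q+1) with hw
  have hq1 : (0:ℝ) < q + 1 := by linarith
  have hw0 : 0 ≤ w := by positivity
  have hw1 : w ≤ 1 := by
    rw [hw, div_le_one hq1]; linarith
  have hA := lemA hw0 hw1
  have hqw : q * w = 2 - w := by
    rw [hw]; field_simp; ring
  have hwpos : 0 < w := by rw [hw]; positivity
  have h2 : (q * w) * Real.exp w = (2 - w) * Real.exp w := by rw [hqw]
  have h3 : 2 - 2*w + Real.exp 1 * w ≤ (q*w) * Real.exp w := by rw [h2]; exact hA
  have h4 : 2 - 2*w = (q - 1) * w := by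
    have : (q-1)*w = q*w - w := by ring
    rw [this, hqw]; ring
  rw [h4] at h3
  have := (mul_le_mul_iff_of_pos_right hwpos).mp (by linarith [h3] : (q + Real.exp 1 - 1) * w ≤ (q * Real.exp w) * w)
  linarith [this]

/-- For every positive integer `n` and every real `p > 0` with `p ≠ 1`,
`(1 - p^(1/(1-p) - n pⁿ/(1-pⁿ))) / (1 - pⁿ) ≥ 1/e`. -/
theorem truncated_geometric_key_inequality
    (n : ℕ) (hn : 1 ≤ n) (p : ℝ) (hp : 0 < p) (hp1 : p ≠ 1) :
    Real.exp (-1) ≤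
      (1 - p ^ (1 / (1 - p) - n * p ^ n / (1 - p ^ n))) / (1 - p ^ n) := by
  have hn0 : n ≠ 0 := by omega
  set q := p ^ n with hqdef
  have hq0 : 0 < q := pow_pos hp n
  set X : ℝ := 1 / (1 - p) - n * q / (1 - q) with hXdef
  have hpow : p ^ X = Real.exp (Real.log p * X) := Real.rpow_def_of_pos hp X
  have hlq : Real.log q = n * Real.log p := by rw [hqdef, Real.log_pow]
  rcases lt_or_gt_of_ne hp1 with hlt | hgt
  · -- p < 1
    have hq1 : q < 1 := pow_lt_one₀ hp.le hlt hn0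
    have hp1' : p - 1 ≠ 0 := by intro h; apply hp1; linarith [sub_eq_zero.mp h]
    have hq1' : q - 1 ≠ 0 := by intro h; nlinarith [sub_eq_zero.mp h]
    have h1p : (1:ℝ) - p ≠ 0 := by intro h; apply hp1'; linarith [sub_eq_zero.mp h]
    have h1q : (1:ℝ) - q ≠ 0 := by intro h; apply hq1'; linarith [sub_eq_zero.mp h]
    have hXt : Real.log p * X = q * Real.log q / (q-1) - Real.log p / (p-1) := by
      rw [hXdef, hlq]
      field_simp
      ring
    have hu : 1 ≤ Real.log p / (p-1) := by
      rw [le_div_iff_of_neg (by linarith : p - 1 < 0)]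
      linarith [Real.log_le_sub_one_of_pos hp]
    have hqv : q * Real.log q / (q-1) ≤ (q+1)/2 := by
      rw [div_le_iff_of_neg (by linarith : q - 1 < 0)]
      have hL := L2' hq0 hq1.le
      have e1 : q*(q - 1/q) = q^2 - 1 := by field_simp
      nlinarith [mul_le_mul_of_nonneg_left hL hq0.le, e1]
    have hXle : Real.log p * X ≤ (q-1)/2 := by rw [hXt]; linarith
    have hx1 : (0:ℝ) ≤ (1-q)/2 := by linarith
    have hx2 : (1-q)/2 ≤ 1/2 := by linarith
    have hch := chordS1 hx1 hx2
    have hexple : p ^ X ≤ 1 - Real.exp (-1) * (1-q) := by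
      rw [hpow]
      calc Real.exp (Real.log p * X) ≤ Real.exp (-(1-q)/2) := by
            apply Real.exp_le_exp.mpr; linarith
        _ = Real.exp (-((1-q)/2)) := by ring_nf
        _ ≤ 1 - 2 * Real.exp (-1) * ((1-q)/2) := hch
        _ = 1 - Real.exp (-1) * (1-q) := by ring
    rw [le_div_iff₀ (by linarith : (0:ℝ) < 1 - q)]
    linarith
  · -- p > 1
    have hq1 : 1 < q := one_lt_pow₀ hgt hn0
    have hp1' : p - 1 ≠ 0 := by intro h; apply hp1; linarith [sub_eq_zero.mp h]
    have hq1' : q - 1 ≠ 0 := by linarith [hq1]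
    have h1p : (1:ℝ) - p ≠ 0 := by intro h; apply hp1'; linarith [sub_eq_zero.mp h]
    have h1q : (1:ℝ) - q ≠ 0 := by intro h; apply hq1'; linarith [sub_eq_zero.mp h]
    have hXt : Real.log p * X = q * Real.log q / (q-1) - Real.log p / (p-1) := by
      rw [hXdef, hlq]
      field_simp
      ring
    have hu : Real.log p / (p-1) ≤ 1 := by
      rw [div_le_one (by linarith : (0:ℝ) < p - 1)]
      exact Real.log_le_sub_one_of_pos hp
    have hv : 2/(q+1) ≤ Real.log q / (q-1) := by
      rw [div_le_div_iff₀ (by linarith : (0:ℝ) < q+1) (by linarith : (0:ℝ) < q-1)]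
      have := L1' hq1.le
      rw [div_le_iff₀ (by linarith : (0:ℝ) < q+1)] at this
      linarith
    have hqv : q * Real.log q / (q-1) = Real.log q + Real.log q / (q-1) := by
      field_simp
      ring
    have hXge : Real.log q + 2/(q+1) - 1 ≤ Real.log p * X := by
      rw [hXt, hqv]; linarith
    have hexpge : (q + Real.exp 1 - 1) * Real.exp (-1) ≤ p ^ X := by
      rw [hpow]
      calc (q + Real.exp 1 - 1) * Real.exp (-1)
          ≤ (q * Real.exp (2/(q+1))) * Real.exp (-1) := by
            apply mul_le_mul_of_nonneg_right (lemB hq1.le) (Real.exp_pos _).le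
        _ = Real.exp (Real.log q + 2/(q+1) - 1) := by
            rw [show Real.log q + 2/(q+1) - 1 = Real.log q + (2/(q+1) + (-1)) by ring,
              Real.exp_add, Real.exp_add, Real.exp_log hq0]
            ring
        _ ≤ Real.exp (Real.log p * X) := Real.exp_le_exp.mpr hXge
    have hee : Real.exp 1 * Real.exp (-1) = 1 := by
      rw [← Real.exp_add]; norm_num
    rw [le_div_iff_of_neg (by linarith : 1 - q < 0)]
    nlinarith [hexpge, hee]
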